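/- arXiv:1904.06795 — 3 statements merged into one kernel-verified Lean document; each statement's English description precedes it below -/
import Mathlib

section
/- (Section 3, equations (3.5)–(3.6)) Let s ≥ 0 and let 𝒫₀' ⊆ 𝒫. For each ζ ∈ 𝒫₀' let (μ(t,ζ))_{t≥s} be a solution of the nonlinear Fokker–Planck equation from time s with μ(s,ζ) = ζ, such that ζ ↦ μ(t,ζ) is Borel measurable for each t ≥ s. Let Γ be a Borel probability measure on 𝒫 concentrated on 𝒫₀' such that ∫_𝒫 ∫_s^t ∫_{ℝ^d}(|b|+‖σ‖²)(r,x,μ(r,ζ)) μ(r,ζ)(dx) dr Γ(dζ) < ∞ for all t ≥ s. Then Γ_t := Γ∘μ(t,·)^{-1} (the pushforward of Γ under ζ ↦ μ(t,ζ)), t ≥ s, is a weakly continuous path in 𝒫(𝒫) which solves the linear Fokker–Planck equation ∂_tΓ_t = 𝐋*_tΓ_t from time s with Γ_s = Γ. -/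
open MeasureTheory Filter Topology Matrix
open scoped ENNReal NNReal

noncomputable section

abbrev Rd (d : ℕ) : Type := EuclideanSpace ℝ (Fin d)

abbrev Prob (d : ℕ) : Type := ProbabilityMeasure (Rd d)

instance (d : ℕ) : MeasurableSpace (Prob d) := borel _
instance (d : ℕ) : BorelSpace (Prob d) := ⟨rfl⟩

/-- The Kolmogorov operator `L_{t,μ} h (x)`. -/
def kolmOp {d m : ℕ} (b : ℝ → Rd d → Prob d → Rd d)
    (σ : ℝ → Rd d → Prob d → Matrix (Fin d) (Fin m) ℝ)
    (t : ℝ) (μ : Prob d) (h : Rd d → ℝ) (x : Rd d) : ℝ :=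
  (1/2) * ∑ i : Fin d, ∑ j : Fin d,
      (σ t x μ * (σ t x μ)ᵀ) i j *
        fderiv ℝ (fun y => fderiv ℝ h y (EuclideanSpace.single j 1)) x (EuclideanSpace.single i 1)
    + ∑ i : Fin d, b t x μ i * fderiv ℝ h x (EuclideanSpace.single i 1)

/-- `|b| + ‖σ‖²` (Hilbert–Schmidt norm squared) evaluated at `(t,x,μ)`. -/
def coefIntegrand {d m : ℕ} (b : ℝ → Rd d → Prob d → Rd d)
    (σ : ℝ → Rd d → Prob d → Matrix (Fin d) (Fin m) ℝ)
    (t : ℝ) (μ : Prob d) (x : Rd d) : ℝ :=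
  ‖b t x μ‖ + ∑ i : Fin d, ∑ j : Fin m, (σ t x μ i j)^2

/-- `h ∈ C_c²(ℝ^d)`. -/
def IsTestFun {d : ℕ} (h : Rd d → ℝ) : Prop := ContDiff ℝ 2 h ∧ HasCompactSupport h

/-- Data representing a cylinder function `F ∈ ℱC_b²(𝒫)`. -/
structure Cylinder (d : ℕ) where
  n : ℕ
  npos : 1 ≤ n
  f : (Fin n → ℝ) → ℝ
  h : Fin n → Rd d → ℝ
  f_diff : ContDiff ℝ 1 f
  f_bdd : ∃ C : ℝ, ∀ y, |f y| ≤ C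
  f_deriv_bdd : ∃ C : ℝ, ∀ y, ‖fderiv ℝ f y‖ ≤ C
  h_test : ∀ i, IsTestFun (h i)

def Cylinder.eval {d : ℕ} (F : Cylinder d) (μ : Prob d) : ℝ :=
  F.f (fun i => ∫ x, F.h i x ∂(μ.toMeasure))

/-- The linearized Kolmogorov operator `𝐋_t F (μ)` on cylinder functions. -/
def bigL {d m : ℕ} (b : ℝ → Rd d → Prob d → Rd d)
    (σ : ℝ → Rd d → Prob d → Matrix (Fin d) (Fin m) ℝ)
    (t : ℝ) (F : Cylinder d) (μ : Prob d) : ℝ :=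
  ∑ i : Fin F.n,
    fderiv ℝ F.f (fun j => ∫ x, F.h j x ∂(μ.toMeasure)) (Pi.single i 1) *
      ∫ x, kolmOp b σ t μ (F.h i) x ∂(μ.toMeasure)

/-- Solution of the nonlinear Fokker–Planck equation from time `s`. -/
def IsFPSol {d m : ℕ} (b : ℝ → Rd d → Prob d → Rd d)
    (σ : ℝ → Rd d → Prob d → Matrix (Fin d) (Fin m) ℝ)
    (s : ℝ) (μ : ℝ → Prob d) : Prop :=
  ContinuousOn μ (Set.Ici s) ∧
  (∀ t ≥ s, ∫⁻ r in Set.Icc s t,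
      ∫⁻ x, ENNReal.ofReal (coefIntegrand b σ r (μ r) x) ∂((μ r).toMeasure) < ⊤) ∧
  (∀ t ≥ s, ∀ h : Rd d → ℝ, IsTestFun h →
    ∫ x, h x ∂((μ t).toMeasure) = ∫ x, h x ∂((μ s).toMeasure) +
      ∫ r in Set.Icc s t, ∫ x, kolmOp b σ r (μ r) h x ∂((μ r).toMeasure))

/-- The product measure `ν × δ_μ` as a probability measure on `ℝ^d × 𝒫`. -/
def prodDirac {d : ℕ} (ν μ : Prob d) : ProbabilityMeasure (Rd d × Prob d) :=
  ⟨(ν.toMeasure).prod (Measure.dirac μ), by infer_instance⟩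




lemma measurable_evalSet {d : ℕ} {A : Set (Rd d)} (hA : MeasurableSet A) :
    Measurable fun ξ : Prob d => ξ.toMeasure A := by
  have hgen : (inferInstance : MeasurableSpace (Rd d))
      = MeasurableSpace.generateFrom {s : Set (Rd d) | IsClosed s} := by
    rw [BorelSpace.measurable_eq (α := Rd d), borel_eq_generateFrom_isClosed]
  revert A
  have key : ∀ t : Set (Rd d), MeasurableSet t → Measurable fun ξ : Prob d => ξ.toMeasure t := by
    refine MeasurableSpace.induction_on_inter hgen ?_ ?_ ?_ ?_ ?_
    · rintro u hu v hv -
      exact hu.inter hv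
    · simp only [measure_empty]; exact measurable_const
    · rintro F (hF : IsClosed F)
      have hmeas : ∀ n : ℕ, Measurable fun ξ : Prob d =>
          ∫⁻ x, ((hF.apprSeq n x : ℝ≥0) : ℝ≥0∞) ∂ξ.toMeasure := by
        intro n
        have : (fun ξ : Prob d => ∫⁻ x, ((hF.apprSeq n x : ℝ≥0) : ℝ≥0∞) ∂ξ.toMeasure)
            = fun ξ : Prob d => ((ξ.toFiniteMeasure.testAgainstNN (hF.apprSeq n) : ℝ≥0) : ℝ≥0∞) := by
          funext ξ
          rw [FiniteMeasure.testAgainstNN_coe_eq]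
          rfl
        rw [this]
        exact (ENNReal.continuous_coe.comp
          (ProbabilityMeasure.continuous_testAgainstNN_eval (hF.apprSeq n))).measurable
      refine measurable_of_tendsto_metrizable' atTop hmeas ?_
      rw [tendsto_pi_nhds]
      intro ξ
      exact HasOuterApproxClosed.tendsto_lintegral_apprSeq hF ξ.toMeasure
    · intro t htm hmeas
      have : (fun ξ : Prob d => ξ.toMeasure tᶜ) = fun ξ : Prob d => 1 - ξ.toMeasure t := by
        funext ξ
        rw [measure_compl htm (measure_ne_top _ _), measure_univ]
      rw [this]
      exact measurable_const.sub hmeas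
    · intro f hdisj hfm hmeas
      have : (fun ξ : Prob d => ξ.toMeasure (⋃ i, f i))
          = fun ξ : Prob d => ∑' i, ξ.toMeasure (f i) := by
        funext ξ
        exact measure_iUnion hdisj hfm
      rw [this]
      exact Measurable.ennreal_tsum hmeas
  exact fun A hA => key A hA

lemma measurable_toGiry {d : ℕ} : Measurable fun ξ : Prob d => ξ.toMeasure :=
  Measure.measurable_of_measurable_coe _ fun _A hA => measurable_evalSet hA

def probKer (d : ℕ) {α : Type} [MeasurableSpace α] : ProbabilityTheory.Kernel (α × Prob d) (Rd d) :=
  { toFun := fun p => p.2.toMeasure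
    measurable' := measurable_toGiry.comp measurable_snd }

instance (d : ℕ) {α : Type} [MeasurableSpace α] : ProbabilityTheory.IsMarkovKernel (probKer d (α := α)) :=
  ⟨fun p => p.2.2⟩

lemma probKer_apply {d : ℕ} {α : Type} [MeasurableSpace α] (p : α × Prob d) :
    probKer d p = p.2.toMeasure := rfl

lemma measurable_lintegral_prob {d : ℕ} {α : Type} [MeasurableSpace α]
    {f : (α × Prob d) × Rd d → ℝ≥0∞} (hf : Measurable f) :
    Measurable fun p : α × Prob d => ∫⁻ x, f (p, x) ∂p.2.toMeasure := by
  have := Measurable.lintegral_kernel_prod_right' (κ := probKer d (α := α)) hf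
  simpa [probKer_apply] using this

lemma stronglyMeasurable_integral_prob {d : ℕ} {α : Type} [MeasurableSpace α]
    {E : Type} [NormedAddCommGroup E] [NormedSpace ℝ E]
    {f : (α × Prob d) × Rd d → E} (hf : StronglyMeasurable f) :
    StronglyMeasurable fun p : α × Prob d => ∫ x, f (p, x) ∂p.2.toMeasure := by
  have := MeasureTheory.StronglyMeasurable.integral_kernel_prod_right' (κ := probKer d (α := α)) hf
  simpa [probKer_apply] using this


lemma coord_abs_le_norm {d : ℕ} (x : Rd d) (i : Fin d) : |x i| ≤ ‖x‖ := by
  rw [EuclideanSpace.norm_eq]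
  have h1 : |x i| = Real.sqrt (|x i| ^ 2) := (Real.sqrt_sq (abs_nonneg _)).symm
  rw [h1]
  apply Real.sqrt_le_sqrt
  rw [sq_abs]
  have : (x i) ^ 2 ≤ ∑ j : Fin d, ‖x j‖ ^ 2 := by
    have := Finset.single_le_sum (f := fun j : Fin d => ‖x j‖ ^ 2)
      (fun j _ => by positivity) (Finset.mem_univ i)
    simpa [Real.norm_eq_abs, sq_abs] using this
  exact this

lemma testFun_deriv_bounds {d : ℕ} {h : Rd d → ℝ} (hh : IsTestFun h) :
    ∃ C : ℝ, 0 ≤ C ∧ (∀ x (i : Fin d), |fderiv ℝ h x (EuclideanSpace.single i 1)| ≤ C) ∧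
      (∀ x (i j : Fin d), |fderiv ℝ (fun y => fderiv ℝ h y (EuclideanSpace.single j 1)) x
        (EuclideanSpace.single i 1)| ≤ C) := by
  have hder : ContDiff ℝ 1 (fderiv ℝ h) := hh.1.fderiv_right (le_refl _)
  obtain ⟨C1, hC1⟩ := (hh.2.fderiv (𝕜 := ℝ)).exists_bound_of_continuous
    (hder.continuous)
  have hu : ∀ j : Fin d, ∃ C : ℝ, 0 ≤ C ∧ ∀ x (i : Fin d),
      |fderiv ℝ (fun y => fderiv ℝ h y (EuclideanSpace.single j 1)) x
        (EuclideanSpace.single i 1)| ≤ C := by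
    intro j
    have hcd : ContDiff ℝ 1 (fun y => fderiv ℝ h y (EuclideanSpace.single j 1)) :=
      hder.clm_apply contDiff_const
    have hcs : HasCompactSupport (fun y => fderiv ℝ h y (EuclideanSpace.single j 1)) :=
      hh.2.fderiv_apply (𝕜 := ℝ) _
    obtain ⟨C2, hC2⟩ := (hcs.fderiv (𝕜 := ℝ)).exists_bound_of_continuous
      (hcd.continuous_fderiv one_ne_zero)
    refine ⟨max C2 0, le_max_right _ _, fun x i => ?_⟩
    calc |fderiv ℝ (fun y => fderiv ℝ h y (EuclideanSpace.single j 1)) x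
          (EuclideanSpace.single i 1)|
        = ‖fderiv ℝ (fun y => fderiv ℝ h y (EuclideanSpace.single j 1)) x
          (EuclideanSpace.single i 1)‖ := (Real.norm_eq_abs _).symm
      _ ≤ ‖fderiv ℝ (fun y => fderiv ℝ h y (EuclideanSpace.single j 1)) x‖
          * ‖(EuclideanSpace.single i 1 : Rd d)‖ := ContinuousLinearMap.le_opNorm _ _
      _ = ‖fderiv ℝ (fun y => fderiv ℝ h y (EuclideanSpace.single j 1)) x‖ := by
          rw [EuclideanSpace.norm_single, norm_one, mul_one]
      _ ≤ max C2 0 := le_trans (hC2 x) (le_max_left _ _)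
  choose C2 hC2nn hC2 using hu
  refine ⟨max C1 0 + ∑ j : Fin d, C2 j,
    add_nonneg (le_max_right _ _) (Finset.sum_nonneg fun j _ => hC2nn j),
    fun x i => ?_, fun x i j => ?_⟩
  · have : |fderiv ℝ h x (EuclideanSpace.single i 1)| ≤ ‖fderiv ℝ h x‖ := by
      calc |fderiv ℝ h x (EuclideanSpace.single i 1)|
          = ‖fderiv ℝ h x (EuclideanSpace.single i 1)‖ := (Real.norm_eq_abs _).symm
        _ ≤ ‖fderiv ℝ h x‖ * ‖(EuclideanSpace.single i 1 : Rd d)‖ :=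
            ContinuousLinearMap.le_opNorm _ _
        _ = ‖fderiv ℝ h x‖ := by rw [EuclideanSpace.norm_single, norm_one, mul_one]
    have hs : (0:ℝ) ≤ ∑ j : Fin d, C2 j := Finset.sum_nonneg fun j _ => hC2nn j
    have := le_trans this (le_trans (hC1 x) (le_max_left C1 0))
    linarith
  · have h1 : |fderiv ℝ (fun y => fderiv ℝ h y (EuclideanSpace.single j 1)) x
        (EuclideanSpace.single i 1)| ≤ C2 j := hC2 j x i
    have h2 : C2 j ≤ ∑ j' : Fin d, C2 j' :=
      Finset.single_le_sum (fun j' _ => hC2nn j') (Finset.mem_univ j)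
    have : (0:ℝ) ≤ max C1 0 := le_max_right _ _
    linarith

lemma kolmOp_bound {d m : ℕ} (b : ℝ → Rd d → Prob d → Rd d)
    (σ : ℝ → Rd d → Prob d → Matrix (Fin d) (Fin m) ℝ)
    {h : Rd d → ℝ} (hh : IsTestFun h) :
    ∃ K : ℝ, 0 ≤ K ∧ ∀ t μ x, |kolmOp b σ t μ h x| ≤ K * coefIntegrand b σ t μ x := by
  obtain ⟨C, hC0, hC1, hC2⟩ := testFun_deriv_bounds hh
  refine ⟨(1/2) * (d:ℝ)^2 * C + (d:ℝ) * C, by positivity, fun t μ x => ?_⟩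
  set Sσ : ℝ := ∑ i : Fin d, ∑ j : Fin m, (σ t x μ i j)^2 with hSσ
  have hSσ0 : 0 ≤ Sσ := Finset.sum_nonneg fun i _ => Finset.sum_nonneg fun j _ => sq_nonneg _
  have hb0 : (0:ℝ) ≤ ‖b t x μ‖ := norm_nonneg _
  -- row sums of squares bounded by Sσ
  have hrow : ∀ i : Fin d, ∑ k : Fin m, (σ t x μ i k)^2 ≤ Sσ := fun i =>
    Finset.single_le_sum (f := fun i => ∑ j : Fin m, (σ t x μ i j)^2)
      (fun i' _ => Finset.sum_nonneg fun j _ => sq_nonneg _) (Finset.mem_univ i)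
  have hentry : ∀ i j : Fin d, |(σ t x μ * (σ t x μ)ᵀ) i j| ≤ Sσ := by
    intro i j
    rw [Matrix.mul_apply]
    calc |∑ k : Fin m, σ t x μ i k * (σ t x μ)ᵀ k j|
        ≤ ∑ k : Fin m, |σ t x μ i k * (σ t x μ)ᵀ k j| := Finset.abs_sum_le_sum_abs _ _
      _ ≤ ∑ k : Fin m, ((σ t x μ i k)^2 + (σ t x μ j k)^2)/2 := by
          refine Finset.sum_le_sum fun k _ => ?_
          rw [Matrix.transpose_apply, abs_mul]
          nlinarith [sq_nonneg (|σ t x μ i k| - |σ t x μ j k|), abs_nonneg (σ t x μ i k),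
            abs_nonneg (σ t x μ j k), sq_abs (σ t x μ i k), sq_abs (σ t x μ j k)]
      _ = ((∑ k : Fin m, (σ t x μ i k)^2) + ∑ k : Fin m, (σ t x μ j k)^2)/2 := by
          rw [← Finset.sum_add_distrib, ← Finset.sum_div]
      _ ≤ (Sσ + Sσ)/2 := by
          have := hrow i; have := hrow j; linarith
      _ = Sσ := by ring
  have hterm2 : |∑ i : Fin d, ∑ j : Fin d, (σ t x μ * (σ t x μ)ᵀ) i j *
      fderiv ℝ (fun y => fderiv ℝ h y (EuclideanSpace.single j 1)) x (EuclideanSpace.single i 1)|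
      ≤ (d:ℝ)^2 * (Sσ * C) := by
    calc |∑ i : Fin d, ∑ j : Fin d, _| ≤ ∑ i : Fin d, ∑ j : Fin d, |(σ t x μ * (σ t x μ)ᵀ) i j *
        fderiv ℝ (fun y => fderiv ℝ h y (EuclideanSpace.single j 1)) x
          (EuclideanSpace.single i 1)| := by
          refine le_trans (Finset.abs_sum_le_sum_abs _ _) ?_
          exact Finset.sum_le_sum fun i _ => Finset.abs_sum_le_sum_abs _ _
      _ ≤ ∑ _i : Fin d, ∑ _j : Fin d, Sσ * C := by
          refine Finset.sum_le_sum fun i _ => Finset.sum_le_sum fun j _ => ?_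
          rw [abs_mul]
          exact mul_le_mul (hentry i j) (hC2 x i j) (abs_nonneg _) hSσ0
      _ = (d:ℝ)^2 * (Sσ * C) := by
          simp [Finset.sum_const, Finset.card_univ]
          ring
  have hterm1 : |∑ i : Fin d, b t x μ i * fderiv ℝ h x (EuclideanSpace.single i 1)|
      ≤ (d:ℝ) * (‖b t x μ‖ * C) := by
    calc |∑ i : Fin d, b t x μ i * fderiv ℝ h x (EuclideanSpace.single i 1)|
        ≤ ∑ i : Fin d, |b t x μ i * fderiv ℝ h x (EuclideanSpace.single i 1)| :=
          Finset.abs_sum_le_sum_abs _ _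
      _ ≤ ∑ _i : Fin d, ‖b t x μ‖ * C := by
          refine Finset.sum_le_sum fun i _ => ?_
          rw [abs_mul]
          exact mul_le_mul (coord_abs_le_norm _ i) (hC1 x i) (abs_nonneg _) hb0
      _ = (d:ℝ) * (‖b t x μ‖ * C) := by
          simp [Finset.sum_const, Finset.card_univ]
  have : |kolmOp b σ t μ h x| ≤ (1/2) * ((d:ℝ)^2 * (Sσ * C)) + (d:ℝ) * (‖b t x μ‖ * C) := by
    unfold kolmOp
    refine le_trans (abs_add_le _ _) ?_
    rw [abs_mul]
    have : |(1:ℝ)/2| = 1/2 := by norm_num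
    rw [this]
    have := hterm2
    have := hterm1
    nlinarith [hterm2, hterm1]
  unfold coefIntegrand
  rw [← hSσ]
  nlinarith [this, mul_nonneg (mul_nonneg (sq_nonneg (d:ℝ)) hb0) hC0,
    mul_nonneg (mul_nonneg (Nat.cast_nonneg (α := ℝ) d) hSσ0) hC0]

section Integrands

variable {d m : ℕ} (b : ℝ → Rd d → Prob d → Rd d)
    (σ : ℝ → Rd d → Prob d → Matrix (Fin d) (Fin m) ℝ)

lemma measurable_reindex :
    Measurable (fun q : (ℝ × Prob d) × Rd d => (q.1.1, q.2, q.1.2)) :=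
  (measurable_fst.comp measurable_fst).prodMk
    (measurable_snd.prodMk (measurable_snd.comp measurable_fst))

variable {hb0 : True}

lemma measurable_kolm (hb : Measurable (fun p : ℝ × Rd d × Prob d => b p.1 p.2.1 p.2.2))
    (hσ : ∀ i j, Measurable (fun p : ℝ × Rd d × Prob d => σ p.1 p.2.1 p.2.2 i j)) {h : Rd d → ℝ} (hh : IsTestFun h) :
    Measurable (fun q : (ℝ × Prob d) × Rd d => kolmOp b σ q.1.1 q.1.2 h q.2) := by
  have hσ' : ∀ i j, Measurable fun q : (ℝ × Prob d) × Rd d => σ q.1.1 q.2 q.1.2 i j :=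
    fun i j => (hσ i j).comp (measurable_reindex)
  have hb' : ∀ i, Measurable fun q : (ℝ × Prob d) × Rd d => b q.1.1 q.2 q.1.2 i :=
    fun i => (measurable_pi_apply i).comp ((PiLp.continuous_ofLp 2 _).measurable.comp (hb.comp (measurable_reindex)))
  have hder : ContDiff ℝ 1 (fderiv ℝ h) := hh.1.fderiv_right (le_refl _)
  have hψ1 : ∀ i : Fin d, Continuous fun x : Rd d => fderiv ℝ h x (EuclideanSpace.single i 1) :=
    fun i => hder.continuous.clm_apply continuous_const
  have hψ2 : ∀ i j : Fin d, Continuous fun x : Rd d =>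
      fderiv ℝ (fun y => fderiv ℝ h y (EuclideanSpace.single j 1)) x (EuclideanSpace.single i 1) := by
    intro i j
    have hcd : ContDiff ℝ 1 (fun y => fderiv ℝ h y (EuclideanSpace.single j 1)) :=
      hder.clm_apply contDiff_const
    exact (hcd.continuous_fderiv one_ne_zero).clm_apply continuous_const
  unfold kolmOp
  apply Measurable.add
  · apply Measurable.const_mul
    apply Finset.measurable_sum
    intro i _
    apply Finset.measurable_sum
    intro j _
    apply Measurable.mul
    · simp_rw [Matrix.mul_apply, Matrix.transpose_apply]
      exact Finset.measurable_sum _ fun k _ => (hσ' i k).mul (hσ' j k)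
    · exact ((hψ2 i j).measurable).comp measurable_snd
  · apply Finset.measurable_sum
    intro i _
    exact (hb' i).mul (((hψ1 i).measurable).comp measurable_snd)

lemma measurable_coef (hb : Measurable (fun p : ℝ × Rd d × Prob d => b p.1 p.2.1 p.2.2))
    (hσ : ∀ i j, Measurable (fun p : ℝ × Rd d × Prob d => σ p.1 p.2.1 p.2.2 i j)) :
    Measurable (fun q : (ℝ × Prob d) × Rd d => coefIntegrand b σ q.1.1 q.1.2 q.2) := by
  have hσ' : ∀ i j, Measurable fun q : (ℝ × Prob d) × Rd d => σ q.1.1 q.2 q.1.2 i j :=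
    fun i j => (hσ i j).comp (measurable_reindex)
  unfold coefIntegrand
  apply Measurable.add
  · exact (hb.comp (measurable_reindex)).norm
  · exact Finset.measurable_sum _ fun i _ => Finset.measurable_sum _ fun j _ => (hσ' i j).pow_const 2

/-- `I(r, ξ) = ∫⁻ (|b|+‖σ‖²) dξ`. -/
def IInt : ℝ × Prob d → ℝ≥0∞ :=
  fun p => ∫⁻ x, ENNReal.ofReal (coefIntegrand b σ p.1 p.2 x) ∂p.2.toMeasure

lemma measurable_IInt (hb : Measurable (fun p : ℝ × Rd d × Prob d => b p.1 p.2.1 p.2.2))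
    (hσ : ∀ i j, Measurable (fun p : ℝ × Rd d × Prob d => σ p.1 p.2.1 p.2.2 i j)) :
    Measurable (IInt b σ) := by
  unfold IInt
  exact measurable_lintegral_prob ((measurable_coef b σ hb hσ).ennreal_ofReal)

/-- `g(r, ξ) = ∫ L_{r,ξ} h dξ`. -/
def gI (h : Rd d → ℝ) : ℝ × Prob d → ℝ :=
  fun p => ∫ x, kolmOp b σ p.1 p.2 h x ∂p.2.toMeasure

lemma stronglyMeasurable_gI (hb : Measurable (fun p : ℝ × Rd d × Prob d => b p.1 p.2.1 p.2.2))
    (hσ : ∀ i j, Measurable (fun p : ℝ × Rd d × Prob d => σ p.1 p.2.1 p.2.2 i j))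
    {h : Rd d → ℝ} (hh : IsTestFun h) :
    StronglyMeasurable (gI b σ h) := by
  unfold gI
  exact stronglyMeasurable_integral_prob (measurable_kolm b σ hb hσ hh).stronglyMeasurable

lemma lintegral_kolm_le (hb : Measurable (fun p : ℝ × Rd d × Prob d => b p.1 p.2.1 p.2.2))
    (hσ : ∀ i j, Measurable (fun p : ℝ × Rd d × Prob d => σ p.1 p.2.1 p.2.2 i j)) {h : Rd d → ℝ} {K : ℝ} (hK : 0 ≤ K)
    (hbd : ∀ t μ x, |kolmOp b σ t μ h x| ≤ K * coefIntegrand b σ t μ x) (p : ℝ × Prob d) :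
    ∫⁻ x, ENNReal.ofReal ‖kolmOp b σ p.1 p.2 h x‖ ∂p.2.toMeasure
      ≤ ENNReal.ofReal K * IInt b σ p := by
  have : ∀ x, ENNReal.ofReal ‖kolmOp b σ p.1 p.2 h x‖
      ≤ ENNReal.ofReal K * ENNReal.ofReal (coefIntegrand b σ p.1 p.2 x) := by
    intro x
    rw [← ENNReal.ofReal_mul hK]
    exact ENNReal.ofReal_le_ofReal (by rw [Real.norm_eq_abs]; exact hbd p.1 p.2 x)
  calc ∫⁻ x, ENNReal.ofReal ‖kolmOp b σ p.1 p.2 h x‖ ∂p.2.toMeasure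
      ≤ ∫⁻ x, ENNReal.ofReal K * ENNReal.ofReal (coefIntegrand b σ p.1 p.2 x) ∂p.2.toMeasure :=
        lintegral_mono this
    _ = ENNReal.ofReal K * IInt b σ p := by
        rw [lintegral_const_mul]
        · rfl
        · exact ((measurable_coef b σ hb hσ).comp measurable_prodMk_left).ennreal_ofReal

lemma integrable_kolm (hb : Measurable (fun p : ℝ × Rd d × Prob d => b p.1 p.2.1 p.2.2))
    (hσ : ∀ i j, Measurable (fun p : ℝ × Rd d × Prob d => σ p.1 p.2.1 p.2.2 i j)) {h : Rd d → ℝ} (hh : IsTestFun h) {K : ℝ} (hK : 0 ≤ K)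
    (hbd : ∀ t μ x, |kolmOp b σ t μ h x| ≤ K * coefIntegrand b σ t μ x) (p : ℝ × Prob d)
    (hfin : IInt b σ p ≠ ⊤) :
    Integrable (fun x => kolmOp b σ p.1 p.2 h x) p.2.toMeasure := by
  constructor
  · exact (((measurable_kolm b σ hb hσ hh).comp measurable_prodMk_left)).aestronglyMeasurable
  · rw [hasFiniteIntegral_iff_norm]
    exact lt_of_le_of_lt (lintegral_kolm_le b σ hb hσ hK hbd p)
      (ENNReal.mul_lt_top ENNReal.ofReal_lt_top (lt_top_iff_ne_top.mpr hfin))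

lemma ofReal_gI_le (hb : Measurable (fun p : ℝ × Rd d × Prob d => b p.1 p.2.1 p.2.2))
    (hσ : ∀ i j, Measurable (fun p : ℝ × Rd d × Prob d => σ p.1 p.2.1 p.2.2 i j)) {h : Rd d → ℝ} {K : ℝ} (hK : 0 ≤ K)
    (hbd : ∀ t μ x, |kolmOp b σ t μ h x| ≤ K * coefIntegrand b σ t μ x) (p : ℝ × Prob d) :
    ENNReal.ofReal |gI b σ h p| ≤ ENNReal.ofReal K * IInt b σ p := by
  by_cases hfin : ENNReal.ofReal K * IInt b σ p = ⊤
  · rw [hfin]; exact le_top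
  have hL : ∫⁻ x, ENNReal.ofReal ‖kolmOp b σ p.1 p.2 h x‖ ∂p.2.toMeasure
      ≤ ENNReal.ofReal K * IInt b σ p := lintegral_kolm_le b σ hb hσ hK hbd p
  have h1 : |gI b σ h p| ≤
      (∫⁻ x, ENNReal.ofReal ‖kolmOp b σ p.1 p.2 h x‖ ∂p.2.toMeasure).toReal := by
    rw [← Real.norm_eq_abs]
    exact norm_integral_le_lintegral_norm _
  calc ENNReal.ofReal |gI b σ h p|
      ≤ ENNReal.ofReal ((∫⁻ x, ENNReal.ofReal ‖kolmOp b σ p.1 p.2 h x‖ ∂p.2.toMeasure).toReal) :=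
        ENNReal.ofReal_le_ofReal h1
    _ ≤ ∫⁻ x, ENNReal.ofReal ‖kolmOp b σ p.1 p.2 h x‖ ∂p.2.toMeasure := ENNReal.ofReal_toReal_le
    _ ≤ ENNReal.ofReal K * IInt b σ p := hL

lemma testFun_exists_bcf {h : Rd d → ℝ} (hh : IsTestFun h) :
    ∃ g : BoundedContinuousFunction (Rd d) ℝ, (g : Rd d → ℝ) = h := by
  obtain ⟨C, hC⟩ := hh.2.exists_bound_of_continuous hh.1.continuous
  exact ⟨BoundedContinuousFunction.ofNormedAddCommGroup h hh.1.continuous C hC, rfl⟩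

lemma continuous_testIntegral {h : Rd d → ℝ} (hh : IsTestFun h) :
    Continuous fun ξ : Prob d => ∫ x, h x ∂ξ.toMeasure := by
  obtain ⟨g, hg⟩ := testFun_exists_bcf hh
  have := ProbabilityMeasure.continuous_integral_boundedContinuousFunction (X := Rd d) g
  simpa [hg] using this

end Integrands

section ChainRule

lemma clm_apply_pi {n : ℕ} (L : (Fin n → ℝ) →L[ℝ] ℝ) (y : Fin n → ℝ) :
    L y = ∑ i : Fin n, y i * L (Pi.single i 1) := by
  have hy : y = ∑ i : Fin n, y i • (Pi.single i 1 : Fin n → ℝ) := by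
    funext j
    rw [Finset.sum_apply]
    simp [Pi.single_apply]
  conv_lhs => rw [hy]
  rw [map_sum]
  congr 1
  funext i
  rw [L.map_smul, smul_eq_mul]

lemma chain_FTC {n : ℕ} {f : (Fin n → ℝ) → ℝ} (hf : ContDiff ℝ 1 f)
    {Cf : ℝ} (hCf : ∀ y, ‖fderiv ℝ f y‖ ≤ Cf)
    {s t : ℝ} (hst : s ≤ t) {g : ℝ → Fin n → ℝ}
    (hgm : Measurable g) (hgi : IntegrableOn g (Set.Icc s t))
    {v : ℝ → Fin n → ℝ}
    (hv : ∀ u ∈ Set.Icc s t, v u = v s + ∫ r in Set.Icc s u, g r) :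
    f (v t) = f (v s) + ∫ r in Set.Icc s t, fderiv ℝ f (v r) (g r) := by
  have hCf0 : 0 ≤ Cf := le_trans (norm_nonneg _) (hCf 0)
  set g' : ℝ → Fin n → ℝ := (Set.Icc s t).indicator g with hg'def
  have hg'i : Integrable g' := (integrable_indicator_iff measurableSet_Icc).mpr hgi
  have hg'm : Measurable g' := hgm.indicator measurableSet_Icc
  have hg'eq : ∀ u ∈ Set.Icc s t, g' u = g u := fun u hu => Set.indicator_of_mem hu g
  set V : ℝ → Fin n → ℝ := fun u => v s + ∫ r in s..u, g' r with hVdef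
  have hvV : ∀ u ∈ Set.Icc s t, v u = V u := by
    intro u hu
    rw [hv u hu, hVdef]
    congr 1
    rw [intervalIntegral.integral_of_le hu.1, ← integral_Icc_eq_integral_Ioc]
    refine setIntegral_congr_fun measurableSet_Icc fun r hr => ?_
    exact (Set.indicator_of_mem (Set.mem_of_mem_of_subset hr
      (Set.Icc_subset_Icc le_rfl hu.2)) g).symm
  -- continuous approximations of g'
  have happrox : ∀ k : ℕ, ∃ gk : ℝ → Fin n → ℝ, Continuous gk ∧
      (∫ r, ‖g' r - gk r‖) ≤ 1/(k+1) ∧ Integrable gk := by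
    intro k
    obtain ⟨gk, _, hint, hcont, hgki⟩ :=
      hg'i.exists_hasCompactSupport_integral_sub_le
        (by positivity : (0:ℝ) < 1/(k+1))
    exact ⟨gk, hcont, hint, hgki⟩
  choose gk hgkc hgk1 hgki using happrox
  set Vk : ℕ → ℝ → Fin n → ℝ := fun k u => v s + ∫ r in s..u, gk k r with hVkdef
  have hVkderiv : ∀ k u, HasDerivAt (Vk k) (gk k u) u := by
    intro k u
    exact (((hgkc k).integral_hasStrictDerivAt s u).hasDerivAt).const_add (v s)
  have hVkcont : ∀ k, Continuous (Vk k) :=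
    fun k => continuous_iff_continuousAt.mpr fun u => (hVkderiv k u).continuousAt
  have hdercont : Continuous (fderiv ℝ f) := hf.continuous_fderiv one_ne_zero
  have hphi : ∀ k u, HasDerivAt (fun w => f (Vk k w)) (fderiv ℝ f (Vk k u) (gk k u)) u :=
    fun k u => ((hf.differentiable one_ne_zero) (Vk k u)).hasFDerivAt.comp_hasDerivAt u (hVkderiv k u)
  have hintcont : ∀ k, Continuous fun u => fderiv ℝ f (Vk k u) (gk k u) :=
    fun k => (hdercont.comp (hVkcont k)).clm_apply (hgkc k)
  have hFTC : ∀ k, ∫ u in s..t, fderiv ℝ f (Vk k u) (gk k u) = f (Vk k t) - f (Vk k s) :=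
    fun k => intervalIntegral.integral_eq_sub_of_hasDerivAt (fun u _ => hphi k u)
      ((hintcont k).intervalIntegrable s t)
  have hVks : ∀ k, Vk k s = v s := by
    intro k
    simp [hVkdef, intervalIntegral.integral_same]
  -- convergence of Vk to V
  have hdiff : ∀ k u, s ≤ u → ‖Vk k u - V u‖ ≤ 1/(k+1) := by
    intro k u hu
    have h1 : Vk k u - V u = ∫ r in s..u, (gk k r - g' r) := by
      rw [hVkdef, hVdef]
      rw [intervalIntegral.integral_sub ((hgkc k).intervalIntegrable s u)
        (hg'i.intervalIntegrable)]
      exact add_sub_add_left_eq_sub _ _ _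
    rw [h1]
    calc ‖∫ r in s..u, (gk k r - g' r)‖
        ≤ ∫ r in Set.uIoc s u, ‖gk k r - g' r‖ :=
          intervalIntegral.norm_integral_le_integral_norm_uIoc
      _ = ∫ r in Set.Ioc s u, ‖g' r - gk k r‖ := by
          rw [Set.uIoc_of_le hu]
          congr 1
          funext r
          rw [norm_sub_rev]
      _ ≤ ∫ r, ‖g' r - gk k r‖ := by
          refine setIntegral_le_integral ((hg'i.sub (hgki k)).norm) ?_
          exact Filter.Eventually.of_forall fun r => norm_nonneg _
      _ ≤ 1/(k+1) := hgk1 k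
  have htendsto0 : Tendsto (fun k : ℕ => (1:ℝ)/(k+1)) atTop (𝓝 0) :=
    tendsto_one_div_add_atTop_nhds_zero_nat
  have hVklim : ∀ u, s ≤ u → Tendsto (fun k => Vk k u) atTop (𝓝 (V u)) := by
    intro u hu
    rw [← tendsto_sub_nhds_zero_iff]
    exact squeeze_zero_norm (fun k => hdiff k u hu) htendsto0
  have hLHS : Tendsto (fun k => f (Vk k t)) atTop (𝓝 (f (V t))) :=
    (hf.continuous.tendsto _).comp (hVklim t hst)
  -- convergence of the integrals
  have hmeasF : ∀ k, AEStronglyMeasurable (fun u => fderiv ℝ f (Vk k u) (g' u))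
      (volume.restrict (Set.Ioc s t)) := by
    intro k
    have : Measurable fun u => fderiv ℝ f (Vk k u) (g' u) := by
      have h1 : (fun u => fderiv ℝ f (Vk k u) (g' u))
          = fun u => ∑ i : Fin n, g' u i * fderiv ℝ f (Vk k u) (Pi.single i 1) := by
        funext u
        exact clm_apply_pi _ _
      rw [h1]
      refine Finset.measurable_sum _ fun i _ => Measurable.mul ?_ ?_
      · exact (measurable_pi_apply i).comp hg'm
      · exact ((hdercont.comp (hVkcont k)).clm_apply continuous_const).measurable
    exact this.aestronglyMeasurable
  have hboundF : ∀ k u, ‖fderiv ℝ f (Vk k u) (g' u)‖ ≤ Cf * ‖g' u‖ := by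
    intro k u
    calc ‖fderiv ℝ f (Vk k u) (g' u)‖ ≤ ‖fderiv ℝ f (Vk k u)‖ * ‖g' u‖ :=
        ContinuousLinearMap.le_opNorm _ _
      _ ≤ Cf * ‖g' u‖ := mul_le_mul_of_nonneg_right (hCf _) (norm_nonneg _)
  have hB : Tendsto (fun k => ∫ u in Set.Ioc s t, fderiv ℝ f (Vk k u) (g' u)) atTop
      (𝓝 (∫ u in Set.Ioc s t, fderiv ℝ f (V u) (g' u))) := by
    refine tendsto_integral_of_dominated_convergence (fun u => Cf * ‖g' u‖)
      hmeasF ((hg'i.norm.const_mul Cf).restrict) ?_ ?_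
    · intro k
      exact Filter.Eventually.of_forall fun u => hboundF k u
    · refine (ae_restrict_iff' measurableSet_Ioc).mpr (Filter.Eventually.of_forall ?_)
      intro u hu
      have h1 : Tendsto (fun k => fderiv ℝ f (Vk k u)) atTop (𝓝 (fderiv ℝ f (V u))) :=
        (hdercont.tendsto _).comp (hVklim u (le_of_lt hu.1))
      exact ((ContinuousLinearMap.apply ℝ ℝ (g' u)).continuous.tendsto _).comp h1
  have hintF2 : ∀ k, IntegrableOn (fun u => fderiv ℝ f (Vk k u) (g' u)) (Set.Ioc s t) := by
    intro k
    refine Integrable.mono' ((hg'i.norm.const_mul Cf).restrict) (hmeasF k) ?_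
    exact Filter.Eventually.of_forall fun u => hboundF k u
  have hA : Tendsto (fun k => ∫ u in Set.Ioc s t,
      (fderiv ℝ f (Vk k u) (gk k u) - fderiv ℝ f (Vk k u) (g' u))) atTop (𝓝 0) := by
    have hbnd : ∀ k, ‖∫ u in Set.Ioc s t,
        (fderiv ℝ f (Vk k u) (gk k u) - fderiv ℝ f (Vk k u) (g' u))‖ ≤ Cf * (1/(k+1)) := by
      intro k
      calc ‖∫ u in Set.Ioc s t, (fderiv ℝ f (Vk k u) (gk k u) - fderiv ℝ f (Vk k u) (g' u))‖
          ≤ ∫ u in Set.Ioc s t, ‖fderiv ℝ f (Vk k u) (gk k u) - fderiv ℝ f (Vk k u) (g' u)‖ :=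
            norm_integral_le_integral_norm _
        _ ≤ ∫ u in Set.Ioc s t, Cf * ‖g' u - gk k u‖ := by
            refine integral_mono_of_nonneg (Filter.Eventually.of_forall fun u => norm_nonneg _)
              (((hg'i.sub (hgki k)).norm.const_mul Cf).restrict) ?_
            refine Filter.Eventually.of_forall fun u => ?_
            show ‖fderiv ℝ f (Vk k u) (gk k u) - fderiv ℝ f (Vk k u) (g' u)‖
                ≤ Cf * ‖g' u - gk k u‖
            rw [← map_sub]
            calc ‖fderiv ℝ f (Vk k u) (gk k u - g' u)‖
                ≤ ‖fderiv ℝ f (Vk k u)‖ * ‖gk k u - g' u‖ := ContinuousLinearMap.le_opNorm _ _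
              _ ≤ Cf * ‖g' u - gk k u‖ := by
                  rw [norm_sub_rev (gk k u)]
                  exact mul_le_mul_of_nonneg_right (hCf _) (norm_nonneg _)
        _ = Cf * ∫ u in Set.Ioc s t, ‖g' u - gk k u‖ := by
            simp_rw [← smul_eq_mul]
            rw [integral_smul]
        _ ≤ Cf * (1/(k+1)) := by
            refine mul_le_mul_of_nonneg_left ?_ hCf0
            refine le_trans ?_ (hgk1 k)
            refine setIntegral_le_integral ((hg'i.sub (hgki k)).norm) ?_
            exact Filter.Eventually.of_forall fun r => norm_nonneg _
    have : Tendsto (fun k : ℕ => Cf * (1/(k+1))) atTop (𝓝 (Cf * 0)) :=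
      htendsto0.const_mul Cf
    rw [mul_zero] at this
    exact squeeze_zero_norm hbnd this
  have hIk : ∀ k, ∫ u in s..t, fderiv ℝ f (Vk k u) (gk k u)
      = (∫ u in Set.Ioc s t, (fderiv ℝ f (Vk k u) (gk k u) - fderiv ℝ f (Vk k u) (g' u)))
        + ∫ u in Set.Ioc s t, fderiv ℝ f (Vk k u) (g' u) := by
    intro k
    rw [intervalIntegral.integral_of_le hst, ← integral_add ?_ (hintF2 k)]
    · congr 1
      funext u
      abel
    · have : IntegrableOn (fun u => fderiv ℝ f (Vk k u) (gk k u)) (Set.Ioc s t) :=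
        ((hintcont k).integrableOn_Ioc)
      exact this.sub (hintF2 k)
  have hRHS : Tendsto (fun k => ∫ u in s..t, fderiv ℝ f (Vk k u) (gk k u)) atTop
      (𝓝 (∫ u in Set.Ioc s t, fderiv ℝ f (V u) (g' u))) := by
    have := hA.add hB
    rw [zero_add] at this
    refine Tendsto.congr (fun k => (hIk k).symm) this
  -- take limits in FTC
  have hlim : f (V t) - f (v s) = ∫ u in Set.Ioc s t, fderiv ℝ f (V u) (g' u) := by
    have h1 : Tendsto (fun k => f (Vk k t) - f (Vk k s)) atTop (𝓝 (f (V t) - f (v s))) := by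
      have h2 : Tendsto (fun k => f (Vk k s)) atTop (𝓝 (f (v s))) := by
        have : (fun k => f (Vk k s)) = fun _ => f (v s) := by
          funext k; rw [hVks k]
        rw [this]; exact tendsto_const_nhds
      exact hLHS.sub h2
    refine tendsto_nhds_unique ?_ hRHS
    exact Tendsto.congr (fun k => (hFTC k).symm) h1
  have hfinal : ∫ u in Set.Ioc s t, fderiv ℝ f (V u) (g' u)
      = ∫ r in Set.Icc s t, fderiv ℝ f (v r) (g r) := by
    rw [← integral_Icc_eq_integral_Ioc]
    refine setIntegral_congr_fun measurableSet_Icc fun r hr => ?_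
    rw [hvV r hr, hg'eq r hr]
  rw [hvV t ⟨hst, le_rfl⟩]
  rw [← hfinal, ← hlim]
  ring

end ChainRule
section MainProof

variable {d m : ℕ} (b : ℝ → Rd d → Prob d → Rd d)
    (σ : ℝ → Rd d → Prob d → Matrix (Fin d) (Fin m) ℝ)

lemma continuous_cylEval (F : Cylinder d) : Continuous (F.eval) := by
  have : Continuous fun ξ : Prob d => fun i : Fin F.n => ∫ x, F.h i x ∂ξ.toMeasure :=
    continuous_pi fun i => continuous_testIntegral (F.h_test i)
  exact (F.f_diff.continuous).comp this

lemma bigL_eq (F : Cylinder d) (r : ℝ) (ξ : Prob d) :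
    bigL b σ r F ξ = ∑ i : Fin F.n,
      fderiv ℝ F.f (fun j => ∫ x, F.h j x ∂ξ.toMeasure) (Pi.single i 1)
        * gI b σ (F.h i) (r, ξ) := rfl

lemma measurable_bigL (hb : Measurable (fun p : ℝ × Rd d × Prob d => b p.1 p.2.1 p.2.2))
    (hσ : ∀ i j, Measurable (fun p : ℝ × Rd d × Prob d => σ p.1 p.2.1 p.2.2 i j))
    (F : Cylinder d) :
    Measurable fun p : ℝ × Prob d => bigL b σ p.1 F p.2 := by
  have hVec : Continuous fun ξ : Prob d => fun j : Fin F.n => ∫ x, F.h j x ∂ξ.toMeasure :=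
    continuous_pi fun j => continuous_testIntegral (F.h_test j)
  have hfd : Continuous fun ξ : Prob d =>
      fderiv ℝ F.f (fun j => ∫ x, F.h j x ∂ξ.toMeasure) :=
    (F.f_diff.continuous_fderiv one_ne_zero).comp hVec
  refine Finset.measurable_sum _ fun i _ => Measurable.mul ?_ ?_
  · exact ((hfd.clm_apply continuous_const).measurable).comp measurable_snd
  · exact (stronglyMeasurable_gI b σ hb hσ (F.h_test i)).measurable

lemma norm_pi_single_le {n : ℕ} (i : Fin n) : ‖(Pi.single i 1 : Fin n → ℝ)‖ ≤ 1 := by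
  refine (pi_norm_le_iff_of_nonneg zero_le_one).mpr fun j => ?_
  rcases eq_or_ne j i with rfl | hji
  · simp
  · simp [Pi.single_apply, hji]

lemma abs_bigL_le (F : Cylinder d) {Cf : ℝ} (hCf : ∀ y, ‖fderiv ℝ F.f y‖ ≤ Cf)
    {K : Fin F.n → ℝ}
    (hbd : ∀ i t μ x, |kolmOp b σ t μ (F.h i) x| ≤ K i * coefIntegrand b σ t μ x)
    (hK0 : ∀ i, 0 ≤ K i)
    (hb : Measurable (fun p : ℝ × Rd d × Prob d => b p.1 p.2.1 p.2.2))
    (hσ : ∀ i j, Measurable (fun p : ℝ × Rd d × Prob d => σ p.1 p.2.1 p.2.2 i j))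
    (p : ℝ × Prob d) :
    ENNReal.ofReal |bigL b σ p.1 F p.2|
      ≤ (∑ i : Fin F.n, ENNReal.ofReal Cf * ENNReal.ofReal (K i)) * IInt b σ p := by
  have hCf0 : 0 ≤ Cf := le_trans (norm_nonneg _) (hCf 0)
  have habs : |bigL b σ p.1 F p.2| ≤ ∑ i : Fin F.n, Cf * |gI b σ (F.h i) p| := by
    rw [bigL_eq]
    refine le_trans (Finset.abs_sum_le_sum_abs _ _) (Finset.sum_le_sum fun i _ => ?_)
    rw [abs_mul]
    refine mul_le_mul ?_ le_rfl (abs_nonneg _) hCf0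
    calc |fderiv ℝ F.f (fun j => ∫ x, F.h j x ∂(p.2).toMeasure) (Pi.single i 1)|
        = ‖fderiv ℝ F.f (fun j => ∫ x, F.h j x ∂(p.2).toMeasure) (Pi.single i 1)‖ :=
          (Real.norm_eq_abs _).symm
      _ ≤ ‖fderiv ℝ F.f (fun j => ∫ x, F.h j x ∂(p.2).toMeasure)‖
            * ‖(Pi.single i 1 : Fin F.n → ℝ)‖ := ContinuousLinearMap.le_opNorm _ _
      _ ≤ Cf * 1 := mul_le_mul (hCf _) (norm_pi_single_le i) (norm_nonneg _) hCf0
      _ = Cf := mul_one _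
  calc ENNReal.ofReal |bigL b σ p.1 F p.2|
      ≤ ENNReal.ofReal (∑ i : Fin F.n, Cf * |gI b σ (F.h i) p|) := ENNReal.ofReal_le_ofReal habs
    _ = ∑ i : Fin F.n, ENNReal.ofReal (Cf * |gI b σ (F.h i) p|) :=
        ENNReal.ofReal_sum_of_nonneg fun i _ => mul_nonneg hCf0 (abs_nonneg _)
    _ ≤ ∑ i : Fin F.n, ENNReal.ofReal Cf * (ENNReal.ofReal (K i) * IInt b σ p) := by
        refine Finset.sum_le_sum fun i _ => ?_
        rw [ENNReal.ofReal_mul hCf0]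
        exact mul_le_mul_right (ofReal_gI_le b σ hb hσ (hK0 i) (hbd i) p) _
    _ = (∑ i : Fin F.n, ENNReal.ofReal Cf * ENNReal.ofReal (K i)) * IInt b σ p := by
        rw [Finset.sum_mul]
        congr 1
        funext i
        rw [mul_assoc]

end MainProof

/-- **Section 3, (3.5)–(3.6).** If for each `ζ ∈ 𝒫₀'` the path `μ(·,ζ)` solves
the nonlinear Fokker–Planck equation from time `s` with `μ(s,ζ) = ζ`, measurably in `ζ`, and
`Γ` is a probability measure on `𝒫` concentrated on `𝒫₀'` satisfying the joint integrability
condition, then the pushforwards `Γ_t := Γ ∘ μ(t,·)⁻¹` form a weakly continuous path in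
`𝒫(𝒫)` solving the linear Fokker–Planck equation `∂_t Γ_t = 𝐋*_t Γ_t` from time `s`
with `Γ_s = Γ`. -/
theorem pushforward_solves_linear_FP {d m : ℕ} (hd : 1 ≤ d) (hm : 1 ≤ m)
    (b : ℝ → Rd d → Prob d → Rd d)
    (σ : ℝ → Rd d → Prob d → Matrix (Fin d) (Fin m) ℝ)
    (hb : Measurable (fun p : ℝ × Rd d × Prob d => b p.1 p.2.1 p.2.2))
    (hσ : ∀ i j, Measurable (fun p : ℝ × Rd d × Prob d => σ p.1 p.2.1 p.2.2 i j))
    (s : ℝ) (hs : 0 ≤ s) (P0' : Set (Prob d))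
    (μ : ℝ → Prob d → Prob d)
    (hsol : ∀ ζ ∈ P0', IsFPSol b σ s (fun t => μ t ζ) ∧ μ s ζ = ζ)
    (hmeas : ∀ t ≥ s, Measurable (fun ζ => μ t ζ))
    (Γ : ProbabilityMeasure (Prob d))
    (hconc : ∀ᵐ ζ ∂Γ.toMeasure, ζ ∈ P0')
    (hint : ∀ t ≥ s, ∫⁻ ζ, (∫⁻ r in Set.Icc s t,
        ∫⁻ x, ENNReal.ofReal (coefIntegrand b σ r (μ r ζ) x) ∂((μ r ζ).toMeasure))
          ∂Γ.toMeasure < ⊤) :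
    ∃ Γp : ℝ → ProbabilityMeasure (Prob d),
      (∀ t ≥ s, (Γp t).toMeasure = Γ.toMeasure.map (fun ζ => μ t ζ)) ∧
      Γp s = Γ ∧
      ContinuousOn Γp (Set.Ici s) ∧
      (∀ t ≥ s, ∫⁻ r in Set.Icc s t, ∫⁻ ξ,
          ∫⁻ x, ENNReal.ofReal (coefIntegrand b σ r ξ x) ∂(ξ.toMeasure)
            ∂((Γp r).toMeasure) < ⊤) ∧
      (∀ F : Cylinder d, ∀ t ≥ s,
        ∫ ξ, F.eval ξ ∂((Γp t).toMeasure)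
          = ∫ ξ, F.eval ξ ∂((Γp s).toMeasure)
            + ∫ r in Set.Icc s t, ∫ ξ, bigL b σ r F ξ ∂((Γp r).toMeasure)) := by
    classical
  -- a measurable "good" set S ⊆ P0' of full Γ-measure
  have hnull : Γ.toMeasure {ζ | ζ ∉ P0'} = 0 := by
    have := hconc
    rwa [MeasureTheory.ae_iff] at this
  set N : Set (Prob d) := toMeasurable Γ.toMeasure {ζ | ζ ∉ P0'} with hNdef
  have hNmeas : MeasurableSet N := measurableSet_toMeasurable _ _
  have hNnull : Γ.toMeasure N = 0 := by
    rw [hNdef, measure_toMeasurable]; exact hnull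
  set S : Set (Prob d) := Nᶜ with hSdef
  have hSmeas : MeasurableSet S := hNmeas.compl
  have hSsub : S ⊆ P0' := by
    intro ζ hζ
    by_contra hc
    exact hζ (subset_toMeasurable _ _ hc)
  have hSae : S ∈ ae Γ.toMeasure := by
    rw [mem_ae_iff]
    rwa [hSdef, compl_compl]
  have hSne : S.Nonempty := by
    rw [Set.nonempty_iff_ne_empty]
    intro hS
    have : Γ.toMeasure Set.univ = 0 := by
      have : N = Set.univ := by
        rw [← compl_compl N, ← hSdef, hS, Set.compl_empty]
      rw [← this]; exact hNnull
    rw [measure_univ] at this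
    exact one_ne_zero this
  obtain ⟨ζ₀, hζ₀⟩ := hSne
  -- the modified, everywhere well-behaved flow
  set μ' : ℝ → Prob d → Prob d := fun t => S.piecewise (μ t) (fun _ => μ t ζ₀) with hμ'def
  set μ'' : ℝ → Prob d → Prob d := fun t ζ => μ' (max t s) ζ with hμ''def
  have hμ'S : ∀ t, ∀ ζ ∈ S, μ' t ζ = μ t ζ := fun t ζ hζ => Set.piecewise_eq_of_mem _ _ _ hζ
  have hμ''eq : ∀ t ≥ s, ∀ ζ ∈ S, μ'' t ζ = μ t ζ := by
    intro t ht ζ hζ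
    rw [hμ''def]
    simp only
    rw [max_eq_left ht]
    exact hμ'S t ζ hζ
  have hcont'' : ∀ ζ, Continuous fun t => μ'' t ζ := by
    intro ζ
    have hco : ContinuousOn (fun t => μ' t ζ) (Set.Ici s) := by
      by_cases hζ : ζ ∈ S
      · have : (fun t => μ' t ζ) = fun t => μ t ζ := funext fun t => hμ'S t ζ hζ
        rw [this]
        exact ((hsol ζ (hSsub hζ)).1).1
      · have : (fun t => μ' t ζ) = fun t => μ t ζ₀ :=
          funext fun t => Set.piecewise_eq_of_notMem _ _ _ hζ
        rw [this]
        exact ((hsol ζ₀ (hSsub hζ₀)).1).1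
    exact hco.comp_continuous (continuous_id.max continuous_const) fun t => le_max_right t s
  have hmeas'' : ∀ t, Measurable fun ζ => μ'' t ζ := by
    intro t
    exact Measurable.piecewise hSmeas (hmeas (max t s) (le_max_right t s)) measurable_const
  have huncurry : Measurable fun p : ℝ × Prob d => μ'' p.1 p.2 := by
    have := measurable_uncurry_of_continuous_of_measurable (u := μ'') hcont'' hmeas''
    exact this
  have hjoint : Measurable fun p : ℝ × Prob d => (p.1, μ'' p.1 p.2) :=
    measurable_fst.prodMk huncurry
  have hae : ∀ t ≥ s, (fun ζ => μ'' t ζ) =ᵐ[Γ.toMeasure] fun ζ => μ t ζ := by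
    intro t ht
    filter_upwards [hSae] with ζ hζ
    exact hμ''eq t ht ζ hζ
  -- the pushforward path
  set Γp : ℝ → ProbabilityMeasure (Prob d) := fun t =>
    ⟨Γ.toMeasure.map (μ'' t), Measure.isProbabilityMeasure_map (hmeas'' t).aemeasurable⟩ with hΓpdef
  have hΓp : ∀ t, (Γp t).toMeasure = Γ.toMeasure.map (μ'' t) := fun t => rfl
  -- shared finiteness fact
  have hIcongr : ∀ t ≥ s, ∀ ζ ∈ S,
      (∫⁻ r in Set.Icc s t, IInt b σ (r, μ'' r ζ))
        = ∫⁻ r in Set.Icc s t, IInt b σ (r, μ r ζ) := by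
    intro t ht ζ hζ
    refine setLIntegral_congr_fun measurableSet_Icc ?_
    intro r hr
    show IInt b σ (r, μ'' r ζ) = IInt b σ (r, μ r ζ)
    rw [hμ''eq r hr.1 ζ hζ]
  have hIfin : ∀ t ≥ s,
      ∫⁻ ζ, (∫⁻ r in Set.Icc s t, IInt b σ (r, μ'' r ζ)) ∂Γ.toMeasure < ⊤ := by
    intro t ht
    have hcongr : ∫⁻ ζ, (∫⁻ r in Set.Icc s t, IInt b σ (r, μ'' r ζ)) ∂Γ.toMeasure
        = ∫⁻ ζ, (∫⁻ r in Set.Icc s t, IInt b σ (r, μ r ζ)) ∂Γ.toMeasure := by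
      refine lintegral_congr_ae ?_
      filter_upwards [hSae] with ζ hζ
      exact hIcongr t ht ζ hζ
    rw [hcongr]
    exact hint t ht
  refine ⟨Γp, ?_, ?_, ?_, ?_, ?_⟩
  · -- pushforward identification
    intro t ht
    rw [hΓp t]
    exact Measure.map_congr (hae t ht)
  · -- initial condition
    apply Subtype.ext
    show (Γp s).toMeasure = Γ.toMeasure
    rw [hΓp s]
    have h1 : (fun ζ => μ'' s ζ) =ᵐ[Γ.toMeasure] id := by
      filter_upwards [hSae] with ζ hζ
      rw [hμ''eq s le_rfl ζ hζ]
      exact (hsol ζ (hSsub hζ)).2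
    rw [Measure.map_congr h1, Measure.map_id]
  · -- weak continuity
    intro t₀ ht₀
    have key : ∀ gb : BoundedContinuousFunction (Prob d) ℝ, ∀ t : ℝ,
        ∫ ξ, gb ξ ∂((Γp t : Measure (Prob d))) = ∫ ζ, gb (μ'' t ζ) ∂Γ.toMeasure := by
      intro gb t
      show ∫ ξ, gb ξ ∂((Γp t).toMeasure) = _
      rw [hΓp t]
      exact integral_map (hmeas'' t).aemeasurable
        (gb.continuous.measurable.aestronglyMeasurable)
    have : Tendsto Γp (nhdsWithin t₀ (Set.Ici s)) (𝓝 (Γp t₀)) := by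
      refine ProbabilityMeasure.tendsto_iff_forall_integral_tendsto.mpr ?_
      intro gb
      simp only [key gb]
      refine tendsto_integral_filter_of_dominated_convergence (fun _ => ‖gb‖) ?_ ?_ ?_ ?_
      · exact Filter.Eventually.of_forall fun u =>
          (gb.continuous.measurable.comp (hmeas'' u)).aestronglyMeasurable
      · refine Filter.Eventually.of_forall fun u => ?_
        exact Filter.Eventually.of_forall fun ζ => gb.norm_coe_le_norm _
      · exact integrable_const _
      · refine Filter.Eventually.of_forall fun ζ => ?_
        exact ((gb.continuous.comp (hcont'' ζ)).tendsto t₀).mono_left nhdsWithin_le_nhds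
    exact this
  · -- integrability
    intro t ht
    have hJ : Measurable (IInt b σ) := measurable_IInt b σ hb hσ
    have key1 : ∀ r : ℝ, (∫⁻ ξ, ∫⁻ x, ENNReal.ofReal (coefIntegrand b σ r ξ x)
          ∂(ξ.toMeasure) ∂((Γp r).toMeasure))
        = ∫⁻ ζ, IInt b σ (r, μ'' r ζ) ∂Γ.toMeasure := by
      intro r
      show ∫⁻ ξ, IInt b σ (r, ξ) ∂((Γp r).toMeasure) = _
      rw [hΓp r]
      exact lintegral_map (hJ.comp measurable_prodMk_left) (hmeas'' r)
    simp only [key1]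
    have hswap : (∫⁻ r in Set.Icc s t, ∫⁻ ζ, IInt b σ (r, μ'' r ζ) ∂Γ.toMeasure)
        = ∫⁻ ζ, (∫⁻ r in Set.Icc s t, IInt b σ (r, μ'' r ζ)) ∂Γ.toMeasure := by
      exact lintegral_lintegral_swap ((hJ.comp hjoint).aemeasurable)
    rw [hswap]
    exact hIfin t ht
  · -- the linear FP equation
    intro F t ht
    obtain ⟨Cf, hCf⟩ := F.f_deriv_bdd
    have hCf0 : 0 ≤ Cf := le_trans (norm_nonneg _) (hCf 0)
    choose K hK0 hKbd using fun i : Fin F.n => kolmOp_bound b σ (F.h_test i)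
    have hgIm : ∀ i : Fin F.n, Measurable (gI b σ (F.h i)) := fun i =>
      (stronglyMeasurable_gI b σ hb hσ (F.h_test i)).measurable
    -- the per-trajectory identity
    have hkey : ∀ ζ ∈ S, F.eval (μ'' t ζ) = F.eval (μ'' s ζ)
        + ∫ r in Set.Icc s t, bigL b σ r F (μ'' r ζ) := by
      intro ζ hζ
      have hFP : IsFPSol b σ s (fun r => μ r ζ) := (hsol ζ (hSsub hζ)).1
      set g : ℝ → Fin F.n → ℝ := fun r i => gI b σ (F.h i) (r, μ'' r ζ) with hgdef
      set v : ℝ → Fin F.n → ℝ := fun u i => ∫ x, F.h i x ∂(μ'' u ζ).toMeasure with hvdef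
      have hrζ : Measurable fun r : ℝ => (r, μ'' r ζ) :=
        measurable_id.prodMk (hcont'' ζ).measurable
      have hgm : Measurable g := measurable_pi_iff.mpr fun i => (hgIm i).comp hrζ
      have hfin : ∫⁻ r in Set.Icc s t, IInt b σ (r, μ'' r ζ) < ⊤ := by
        rw [hIcongr t ht ζ hζ]
        exact hFP.2.1 t ht
      have hKsum : (∑ i : Fin F.n, ENNReal.ofReal (K i)) ≠ ⊤ := by
        refine ne_of_lt ?_
        refine ENNReal.sum_lt_top.mpr fun i _ => ENNReal.ofReal_lt_top
      have hgi : IntegrableOn g (Set.Icc s t) := by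
        constructor
        · exact hgm.aestronglyMeasurable
        · rw [hasFiniteIntegral_iff_norm]
          have hbnd : ∀ r : ℝ, ENNReal.ofReal ‖g r‖
              ≤ (∑ i : Fin F.n, ENNReal.ofReal (K i)) * IInt b σ (r, μ'' r ζ) := by
            intro r
            have h1 : ‖g r‖ ≤ ∑ i : Fin F.n, |g r i| := by
              refine (pi_norm_le_iff_of_nonneg
                (Finset.sum_nonneg fun i _ => abs_nonneg _)).mpr fun i => ?_
              rw [Real.norm_eq_abs]
              exact Finset.single_le_sum (f := fun i => |g r i|) (fun i _ => abs_nonneg _)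
                (Finset.mem_univ i)
            calc ENNReal.ofReal ‖g r‖ ≤ ENNReal.ofReal (∑ i : Fin F.n, |g r i|) :=
                ENNReal.ofReal_le_ofReal h1
              _ = ∑ i : Fin F.n, ENNReal.ofReal |g r i| :=
                ENNReal.ofReal_sum_of_nonneg fun i _ => abs_nonneg _
              _ ≤ ∑ i : Fin F.n, ENNReal.ofReal (K i) * IInt b σ (r, μ'' r ζ) :=
                Finset.sum_le_sum fun i _ => ofReal_gI_le b σ hb hσ (hK0 i) (hKbd i) _
              _ = (∑ i : Fin F.n, ENNReal.ofReal (K i)) * IInt b σ (r, μ'' r ζ) :=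
                (Finset.sum_mul _ _ _).symm
          calc ∫⁻ r in Set.Icc s t, ENNReal.ofReal ‖g r‖
              ≤ ∫⁻ r in Set.Icc s t,
                  (∑ i : Fin F.n, ENNReal.ofReal (K i)) * IInt b σ (r, μ'' r ζ) :=
                lintegral_mono fun r => hbnd r
            _ = (∑ i : Fin F.n, ENNReal.ofReal (K i))
                  * ∫⁻ r in Set.Icc s t, IInt b σ (r, μ'' r ζ) :=
                lintegral_const_mul' _ _ hKsum
            _ < ⊤ := ENNReal.mul_lt_top (lt_top_iff_ne_top.mpr hKsum) hfin
      have hv : ∀ u ∈ Set.Icc s t, v u = v s + ∫ r in Set.Icc s u, g r := by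
        intro u hu
        funext i
        have hgiu : IntegrableOn g (Set.Icc s u) :=
          hgi.mono_set (Set.Icc_subset_Icc le_rfl hu.2)
        have hcoord : (∫ r in Set.Icc s u, g r) i = ∫ r in Set.Icc s u, g r i := by
          have hproj := (ContinuousLinearMap.proj (R := ℝ)
            (φ := fun _ : Fin F.n => ℝ) i).integral_comp_comm hgiu
          simpa using hproj.symm
        rw [Pi.add_apply, hcoord]
        have hFPK := hFP.2.2 u hu.1 (F.h i) (F.h_test i)
        have e1 : v u i = ∫ x, F.h i x ∂((μ u ζ).toMeasure) := by
          show ∫ x, F.h i x ∂((μ'' u ζ).toMeasure) = _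
          rw [hμ''eq u hu.1 ζ hζ]
        have e2 : v s i = ∫ x, F.h i x ∂((μ s ζ).toMeasure) := by
          show ∫ x, F.h i x ∂((μ'' s ζ).toMeasure) = _
          rw [hμ''eq s le_rfl ζ hζ]
        have e3 : ∫ r in Set.Icc s u, g r i
            = ∫ r in Set.Icc s u, ∫ x, kolmOp b σ r (μ r ζ) (F.h i) x
                ∂((μ r ζ).toMeasure) := by
          refine setIntegral_congr_fun measurableSet_Icc fun r hr => ?_
          show gI b σ (F.h i) (r, μ'' r ζ) = _
          rw [hμ''eq r hr.1 ζ hζ]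
          rfl
        rw [e1, e2, e3]
        exact hFPK
      have hchain := chain_FTC F.f_diff hCf ht hgm hgi hv
      have hL : ∀ r, fderiv ℝ F.f (v r) (g r) = bigL b σ r F (μ'' r ζ) := by
        intro r
        rw [clm_apply_pi, bigL_eq]
        refine Finset.sum_congr rfl fun i _ => mul_comm _ _
      calc F.eval (μ'' t ζ) = F.f (v t) := rfl
        _ = F.f (v s) + ∫ r in Set.Icc s t, fderiv ℝ F.f (v r) (g r) := hchain
        _ = F.eval (μ'' s ζ) + ∫ r in Set.Icc s t, bigL b σ r F (μ'' r ζ) := by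
            congr 1
            exact integral_congr_ae (Filter.Eventually.of_forall fun r => hL r)
    -- Γ-level computation
    have hΛm : Measurable fun p : ℝ × Prob d => bigL b σ p.1 F p.2 :=
      measurable_bigL b σ hb hσ F
    set CL : ℝ≥0∞ := ∑ i : Fin F.n, ENNReal.ofReal Cf * ENNReal.ofReal (K i) with hCLdef
    have hCLn : CL ≠ ⊤ := by
      refine ne_of_lt (ENNReal.sum_lt_top.mpr fun i _ => ?_)
      exact ENNReal.mul_lt_top ENNReal.ofReal_lt_top ENNReal.ofReal_lt_top
    have hΛbd : ∀ p : ℝ × Prob d, ENNReal.ofReal |bigL b σ p.1 F p.2| ≤ CL * IInt b σ p :=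
      fun p => abs_bigL_le b σ F hCf hKbd hK0 hb hσ p
    have hprod : Integrable (Function.uncurry fun ζ r => bigL b σ r F (μ'' r ζ))
        (Γ.toMeasure.prod (volume.restrict (Set.Icc s t))) := by
      have hm2 : Measurable (Function.uncurry fun ζ r => bigL b σ r F (μ'' r ζ)) := by
        have heq : (Function.uncurry fun ζ r => bigL b σ r F (μ'' r ζ))
            = (fun p : ℝ × Prob d => bigL b σ p.1 F p.2)
              ∘ (fun q : Prob d × ℝ => (q.2, μ'' q.2 q.1)) := rfl
        rw [heq]
        exact hΛm.comp (measurable_snd.prodMk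
          (huncurry.comp (measurable_snd.prodMk measurable_fst)))
      constructor
      · exact hm2.aestronglyMeasurable
      · rw [hasFiniteIntegral_iff_norm]
        rw [lintegral_prod _ (hm2.norm.ennreal_ofReal.aemeasurable)]
        calc ∫⁻ ζ, (∫⁻ r in Set.Icc s t,
              ENNReal.ofReal ‖bigL b σ r F (μ'' r ζ)‖) ∂Γ.toMeasure
            ≤ ∫⁻ ζ, (∫⁻ r in Set.Icc s t, CL * IInt b σ (r, μ'' r ζ)) ∂Γ.toMeasure := by
              refine lintegral_mono fun ζ => lintegral_mono fun r => ?_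
              rw [Real.norm_eq_abs]
              exact hΛbd (r, μ'' r ζ)
          _ = ∫⁻ ζ, (CL * ∫⁻ r in Set.Icc s t, IInt b σ (r, μ'' r ζ)) ∂Γ.toMeasure :=
              lintegral_congr fun ζ => lintegral_const_mul' _ _ hCLn
          _ = CL * ∫⁻ ζ, (∫⁻ r in Set.Icc s t, IInt b σ (r, μ'' r ζ)) ∂Γ.toMeasure :=
              lintegral_const_mul' _ _ hCLn
          _ < ⊤ := ENNReal.mul_lt_top (lt_top_iff_ne_top.mpr hCLn) (hIfin t ht)
    have hFevalc : Continuous (Cylinder.eval (d := d) F) := continuous_cylEval F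
    obtain ⟨Cb, hCb⟩ := F.f_bdd
    have hFeval_im : ∀ u : ℝ, Integrable (fun ζ => F.eval (μ'' u ζ)) Γ.toMeasure := by
      intro u
      refine Integrable.mono' (integrable_const Cb)
        ((hFevalc.measurable.comp (hmeas'' u)).aestronglyMeasurable) ?_
      refine Filter.Eventually.of_forall fun ζ => ?_
      rw [Real.norm_eq_abs]
      exact hCb _
    have hint2 : Integrable (fun ζ => ∫ r in Set.Icc s t, bigL b σ r F (μ'' r ζ))
        Γ.toMeasure := hprod.integral_prod_left
    have e0 : ∫ ξ, F.eval ξ ∂((Γp t).toMeasure) = ∫ ζ, F.eval (μ'' t ζ) ∂Γ.toMeasure := by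
      rw [hΓp t]
      exact integral_map (hmeas'' t).aemeasurable (hFevalc.measurable.aestronglyMeasurable)
    have e0s : ∫ ξ, F.eval ξ ∂((Γp s).toMeasure) = ∫ ζ, F.eval (μ'' s ζ) ∂Γ.toMeasure := by
      rw [hΓp s]
      exact integral_map (hmeas'' s).aemeasurable (hFevalc.measurable.aestronglyMeasurable)
    have e1 : ∫ ζ, F.eval (μ'' t ζ) ∂Γ.toMeasure
        = ∫ ζ, (F.eval (μ'' s ζ) + ∫ r in Set.Icc s t, bigL b σ r F (μ'' r ζ))
            ∂Γ.toMeasure := by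
      refine integral_congr_ae ?_
      filter_upwards [hSae] with ζ hζ
      exact hkey ζ hζ
    have e2 : ∫ ζ, (F.eval (μ'' s ζ) + ∫ r in Set.Icc s t, bigL b σ r F (μ'' r ζ))
          ∂Γ.toMeasure
        = (∫ ζ, F.eval (μ'' s ζ) ∂Γ.toMeasure)
          + ∫ ζ, (∫ r in Set.Icc s t, bigL b σ r F (μ'' r ζ)) ∂Γ.toMeasure :=
      integral_add (hFeval_im s) hint2
    have e3 : ∫ ζ, (∫ r in Set.Icc s t, bigL b σ r F (μ'' r ζ)) ∂Γ.toMeasure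
        = ∫ r in Set.Icc s t, (∫ ζ, bigL b σ r F (μ'' r ζ) ∂Γ.toMeasure) :=
      integral_integral_swap hprod
    have e4 : ∀ r : ℝ, (∫ ζ, bigL b σ r F (μ'' r ζ) ∂Γ.toMeasure)
        = ∫ ξ, bigL b σ r F ξ ∂((Γp r).toMeasure) := by
      intro r
      rw [hΓp r]
      exact (integral_map (hmeas'' r).aemeasurable
        ((hΛm.comp measurable_prodMk_left).aestronglyMeasurable)).symm
    rw [e0, e1, e2, ← e0s, e3]
    congr 1
    exact integral_congr_ae (Filter.Eventually.of_forall fun r => e4 r)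
end
end

section
/- (Proposition 4.8, Chapman–Kolmogorov) The family 𝐏_{s,t}(x,ζ;·) := ν_{s,t}^{ζ,δ_x} × δ_{μ_{s,t}^ζ}, 0 ≤ s ≤ t, (x,ζ) ∈ ℝ^d×𝒫₀, is a Markov transition kernel on ℝ^d×𝒫₀, i.e.: (C₁) for every 0 ≤ s ≤ t and every Borel set A ⊆ ℝ^d×𝒫₀ the map (x,ζ) ↦ 𝐏_{s,t}(x,ζ;A) is Borel measurable, and 𝐏_{s,s}(x,ζ;·) = δ_{(x,ζ)} (the Dirac measure at (x,ζ)); (C₂) the Chapman–Kolmogorov equations hold: 𝐏_{s,t}(x,ζ;·) = ∫_{ℝ^d×𝒫₀} 𝐏_{r,t}(y,μ;·) 𝐏_{s,r}(x,ζ; dy,dμ) for all 0 ≤ s < r < t and all (x,ζ) ∈ ℝ^d×𝒫₀. -/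
open MeasureTheory Filter Topology Matrix

noncomputable section

/-- Evaluation of probability measures on a Borel set is Borel measurable. -/
theorem prob_eval_measurable {d : ℕ} :
    ∀ ⦃A : Set (Rd d)⦄, MeasurableSet A →
      Measurable (fun ν : Prob d => ν.toMeasure A) := by
  refine MeasurableSpace.induction_on_inter BorelSpace.measurable_eq isPiSystem_isOpen ?_ ?_ ?_ ?_
  · simpa using measurable_const
  · intro G hG
    have lsc : LowerSemicontinuous (fun ν : Prob d => ν.toMeasure G) := by
      rw [lowerSemicontinuous_iff_le_liminf]
      intro ν
      exact ProbabilityMeasure.le_liminf_measure_open_of_tendsto tendsto_id hG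
    exact lsc.measurable
  · intro A hA hmeas
    have h1 : (fun ν : Prob d => ν.toMeasure Aᶜ) = fun ν => 1 - ν.toMeasure A := by
      funext ν
      rw [measure_compl hA (measure_ne_top _ _), measure_univ]
    rw [h1]
    exact measurable_const.sub hmeas
  · intro f hdisj hfm hm
    have h1 : (fun ν : Prob d => ν.toMeasure (⋃ i, f i))
        = fun ν => ∑' i, ν.toMeasure (f i) := by
      funext ν; exact measure_iUnion hdisj hfm
    rw [h1]
    exact Measurable.ennreal_tsum hm

/-- Evaluation of `ν × δ_μ` on a Borel set is jointly measurable in `(ν, μ)`. -/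
theorem prodDiracEval_measurable {d : ℕ} :
    ∀ ⦃A : Set (Rd d × Prob d)⦄, MeasurableSet A →
      Measurable (fun q : Prob d × Prob d =>
        ((q.1.toMeasure).prod (Measure.dirac q.2)) A) := by
  refine MeasurableSpace.induction_on_inter generateFrom_prod.symm isPiSystem_prod ?_ ?_ ?_ ?_
  · simpa using measurable_const
  · rintro _ ⟨a, ha, b, hb, rfl⟩
    simp only [Set.mem_setOf_eq] at ha hb
    have h1 : (fun q : Prob d × Prob d => ((q.1.toMeasure).prod (Measure.dirac q.2)) (a ×ˢ b))
        = fun q => q.1.toMeasure a * Set.indicator b 1 q.2 := by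
      funext q
      rw [Measure.prod_prod, Measure.dirac_apply' _ hb]
    rw [h1]
    exact ((prob_eval_measurable ha).comp measurable_fst).mul
      ((measurable_one.indicator hb).comp measurable_snd)
  · intro A hA hmeas
    have h1 : (fun q : Prob d × Prob d => ((q.1.toMeasure).prod (Measure.dirac q.2)) Aᶜ)
        = fun q => 1 - ((q.1.toMeasure).prod (Measure.dirac q.2)) A := by
      funext q
      rw [measure_compl hA (measure_ne_top _ _), measure_univ]
    rw [h1]
    exact measurable_const.sub hmeas
  · intro f hdisj hfm hm
    have h1 : (fun q : Prob d × Prob d => ((q.1.toMeasure).prod (Measure.dirac q.2)) (⋃ i, f i))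
        = fun q => ∑' i, ((q.1.toMeasure).prod (Measure.dirac q.2)) (f i) := by
      funext q; exact measure_iUnion hdisj hfm
    rw [h1]
    exact Measurable.ennreal_tsum hm

theorem prodDirac_apply {d : ℕ} (ν μ : Prob d) {A : Set (Rd d × Prob d)}
    (hA : MeasurableSet A) :
    (prodDirac ν μ).toMeasure A = ν.toMeasure ((fun x => (x, μ)) ⁻¹' A) := by
  show (ν.toMeasure.prod (Measure.dirac μ)) A = _
  rw [Measure.prod_dirac, Measure.map_apply measurable_prodMk_right hA]

/-- **Proposition 4.8.** Given the flows `μ_{s,t}^ζ` (written `M s t ζ`) and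
`ν_{s,t}^{ζ,δ_x}` (written `N s t ζ x`) with the initial, measurability, flow and mixing
properties, the family `𝐏_{s,t}(x,ζ;·) := ν_{s,t}^{ζ,δ_x} × δ_{μ_{s,t}^ζ}` is a Markov
transition kernel on `ℝ^d × 𝒫₀`: (C₁) it is Borel measurable in `(x,ζ)` and satisfies
`𝐏_{s,s}(x,ζ;·) = δ_{(x,ζ)}`; (C₂) the Chapman–Kolmogorov equations hold. -/
theorem markov_transition_kernel {d : ℕ} (hd : 1 ≤ d)
    (P0 : Set (Prob d)) (hP0 : MeasurableSet P0)
    (M : ℝ → ℝ → Prob d → Prob d) (N : ℝ → ℝ → Prob d → Rd d → Prob d)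
    (hM_mem : ∀ s t : ℝ, 0 ≤ s → s ≤ t → ∀ ζ ∈ P0, M s t ζ ∈ P0)
    (hM_init : ∀ s ≥ (0:ℝ), ∀ ζ ∈ P0, M s s ζ = ζ)
    (hN_init : ∀ s ≥ (0:ℝ), ∀ ζ ∈ P0, ∀ x : Rd d,
      (N s s ζ x).toMeasure = Measure.dirac x)
    (hM_meas : ∀ s t : ℝ, 0 ≤ s → s ≤ t → Measurable (fun ζ => M s t ζ))
    (hN_meas : ∀ s t : ℝ, 0 ≤ s → s ≤ t →
      Measurable (fun p : Rd d × Prob d => N s t p.2 p.1))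
    (hflow : ∀ s r t : ℝ, 0 ≤ s → s ≤ r → r ≤ t → ∀ ζ ∈ P0,
      M r t (M s r ζ) = M s t ζ)
    (hmix : ∀ s r t : ℝ, 0 ≤ s → s ≤ r → r ≤ t → ∀ ζ ∈ P0, ∀ x : Rd d,
      ∀ A : Set (Rd d), MeasurableSet A →
        (N s t ζ x).toMeasure A
          = ∫⁻ y, (N r t (M s r ζ) y).toMeasure A ∂((N s r ζ x).toMeasure)) :
    -- (C₁): measurability in `(x,ζ)` ...
    (∀ s t : ℝ, 0 ≤ s → s ≤ t → ∀ A : Set (Rd d × Prob d), MeasurableSet A →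
        Measurable (fun p : Rd d × Prob d => (prodDirac (N s t p.2 p.1) (M s t p.2)).toMeasure A)) ∧
    -- ... and `𝐏_{s,s}(x,ζ;·) = δ_{(x,ζ)}`
    (∀ s ≥ (0:ℝ), ∀ x : Rd d, ∀ ζ ∈ P0,
        (prodDirac (N s s ζ x) (M s s ζ)).toMeasure = Measure.dirac (x, ζ)) ∧
    -- (C₂): Chapman–Kolmogorov equations
    (∀ s r t : ℝ, 0 ≤ s → s < r → r < t → ∀ x : Rd d, ∀ ζ ∈ P0,
        ∀ A : Set (Rd d × Prob d), MeasurableSet A →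
          (prodDirac (N s t ζ x) (M s t ζ)).toMeasure A
            = ∫⁻ p : Rd d × Prob d, (prodDirac (N r t p.2 p.1) (M r t p.2)).toMeasure A
                ∂((prodDirac (N s r ζ x) (M s r ζ)).toMeasure)) := by
  have hmeasP : ∀ s t : ℝ, 0 ≤ s → s ≤ t → ∀ A : Set (Rd d × Prob d), MeasurableSet A →
      Measurable (fun p : Rd d × Prob d =>
        (prodDirac (N s t p.2 p.1) (M s t p.2)).toMeasure A) := by
    intro s t hs hst A hA
    have h1 : Measurable (fun p : Rd d × Prob d => ((N s t p.2 p.1 : Prob d), M s t p.2)) :=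
      (hN_meas s t hs hst).prodMk ((hM_meas s t hs hst).comp measurable_snd)
    exact (prodDiracEval_measurable hA).comp h1
  refine ⟨hmeasP, ?_, ?_⟩
  · intro s hs x ζ hζ
    show ((N s s ζ x).toMeasure).prod (Measure.dirac (M s s ζ)) = _
    rw [hN_init s hs ζ hζ, hM_init s hs ζ hζ, Measure.dirac_prod_dirac]
  · intro s r t hs hsr hrt x ζ hζ A hA
    have hr0 : (0:ℝ) ≤ r := le_trans hs hsr.le
    have hflow' : M r t (M s r ζ) = M s t ζ := hflow s r t hs hsr.le hrt.le ζ hζ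
    have hB : MeasurableSet ((fun y : Rd d => (y, M s t ζ)) ⁻¹' A) :=
      measurable_prodMk_right hA
    have hg : Measurable (fun p : Rd d × Prob d =>
        (prodDirac (N r t p.2 p.1) (M r t p.2)).toMeasure A) :=
      hmeasP r t hr0 hrt.le A hA
    calc (prodDirac (N s t ζ x) (M s t ζ)).toMeasure A
        = (N s t ζ x).toMeasure ((fun y : Rd d => (y, M s t ζ)) ⁻¹' A) :=
          prodDirac_apply _ _ hA
      _ = ∫⁻ y, (N r t (M s r ζ) y).toMeasure ((fun y : Rd d => (y, M s t ζ)) ⁻¹' A)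
            ∂((N s r ζ x).toMeasure) :=
          hmix s r t hs hsr.le hrt.le ζ hζ x _ hB
      _ = ∫⁻ y, (prodDirac (N r t (M s r ζ) y) (M r t (M s r ζ))).toMeasure A
            ∂((N s r ζ x).toMeasure) := by
          refine lintegral_congr fun y => ?_
          rw [prodDirac_apply _ _ hA, hflow']
      _ = ∫⁻ y, ∫⁻ m, (prodDirac (N r t m y) (M r t m)).toMeasure A
            ∂(Measure.dirac (M s r ζ)) ∂((N s r ζ x).toMeasure) := by
          refine lintegral_congr fun y => ?_
          have hgy : Measurable (fun m : Prob d =>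
              (prodDirac (N r t m y) (M r t m)).toMeasure A) :=
            hg.comp measurable_prodMk_left
          exact (lintegral_dirac' _ hgy).symm
      _ = ∫⁻ p : Rd d × Prob d, (prodDirac (N r t p.2 p.1) (M r t p.2)).toMeasure A
            ∂((prodDirac (N s r ζ x) (M s r ζ)).toMeasure) := by
          rw [show (prodDirac (N s r ζ x) (M s r ζ)).toMeasure
              = ((N s r ζ x).toMeasure).prod (Measure.dirac (M s r ζ)) from rfl,
            lintegral_prod _ hg.aemeasurable]
end
end

section
/- (Appendix, well-definedness of the intrinsic gradient ∇^𝒫) Let n, l ≥ 1, f ∈ C_b¹(ℝⁿ), g ∈ C_b¹(ℝˡ), h₁,…,hₙ, k₁,…,k_l ∈ C_c²(ℝ^d), and suppose f(μ(h₁),…,μ(hₙ)) = g(μ(k₁),…,μ(k_l)) for all μ ∈ 𝒫 (two representations of the same cylinder function F). Then for every μ ∈ 𝒫, Σ_{i=1}^n (∂_i f)(μ(h₁),…,μ(hₙ)) ∇h_i(x) = Σ_{j=1}^l (∂_j g)(μ(k₁),…,μ(k_l)) ∇k_j(x) for μ-almost every x ∈ ℝ^d; i.e. the intrinsic gradient ∇^𝒫F(μ)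 ∈ L²(ℝ^d→ℝ^d,μ) is independent of the chosen representation of F. -/
open MeasureTheory Filter Topology

noncomputable section

/-- **Appendix, well-definedness of `∇^𝒫`.** If two cylinder-function
representations `f(μ(h₁),…,μ(hₙ))` and `g(μ(k₁),…,μ(k_l))` agree for all `μ ∈ 𝒫`, then
for every `μ ∈ 𝒫` the corresponding intrinsic gradients agree `μ`-a.e., i.e.
`Σ_i ∂_i f(μ(h₁),…,μ(hₙ)) ∇h_i = Σ_j ∂_j g(μ(k₁),…,μ(k_l)) ∇k_j` in `L²(ℝ^d→ℝ^d, μ)`. -/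
theorem intrinsic_gradient_well_defined {d : ℕ} (hd : 1 ≤ d)
    (n l : ℕ) (hn : 1 ≤ n) (hl : 1 ≤ l)
    (f : (Fin n → ℝ) → ℝ) (g : (Fin l → ℝ) → ℝ)
    (h : Fin n → Rd d → ℝ) (k : Fin l → Rd d → ℝ)
    (hf : ContDiff ℝ 1 f)
    (hfb : ∃ C : ℝ, ∀ y, |f y| ≤ C)
    (hfd : ∃ C : ℝ, ∀ y, ‖fderiv ℝ f y‖ ≤ C)
    (hg : ContDiff ℝ 1 g)
    (hgb : ∃ C : ℝ, ∀ y, |g y| ≤ C)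
    (hgd : ∃ C : ℝ, ∀ y, ‖fderiv ℝ g y‖ ≤ C)
    (hh : ∀ i, ContDiff ℝ 2 (h i) ∧ HasCompactSupport (h i))
    (hk : ∀ j, ContDiff ℝ 2 (k j) ∧ HasCompactSupport (k j))
    (heq : ∀ μ : Prob d,
      f (fun i => ∫ x, h i x ∂μ.toMeasure) = g (fun j => ∫ x, k j x ∂μ.toMeasure)) :
    ∀ μ : Prob d, ∀ᵐ x ∂μ.toMeasure,
      ∑ i : Fin n,
          fderiv ℝ f (fun i' => ∫ y, h i' y ∂μ.toMeasure) (Pi.single i 1) • gradient (h i) x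
        = ∑ j : Fin l,
            fderiv ℝ g (fun j' => ∫ y, k j' y ∂μ.toMeasure) (Pi.single j 1) • gradient (k j) x := by
  classical
  intro μ
  refine Filter.Eventually.of_forall ?_
  intro x
  set a : Fin n → ℝ := fun i => ∫ y, h i y ∂μ.toMeasure with ha
  set b : Fin l → ℝ := fun j => ∫ y, k j y ∂μ.toMeasure with hb
  set c : Fin n → ℝ := fun i => fderiv ℝ f a (Pi.single i 1) with hc
  set e : Fin l → ℝ := fun j => fderiv ℝ g b (Pi.single j 1) with he
  -- key pointwise identity from perturbing μ by Dirac mixtures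
  have key : ∀ z : Rd d,
      fderiv ℝ f a (fun i => h i z - a i) = fderiv ℝ g b (fun j => k j z - b j) := by
    intro z
    set v : ℝ → Fin n → ℝ := fun t i => a i + t * (h i z - a i) with hv
    set w : ℝ → Fin l → ℝ := fun t j => b j + t * (k j z - b j) with hw
    have hveq : ∀ t ∈ Set.Icc (0:ℝ) 1, f (v t) = g (w t) := by
      intro t ht
      set m : Measure (Rd d) :=
        ENNReal.ofReal (1 - t) • μ.toMeasure + ENNReal.ofReal t • Measure.dirac z with hm
      have hprob : IsProbabilityMeasure m := by
        constructor
        simp only [hm, Measure.coe_add, Pi.add_apply, Measure.smul_apply, smul_eq_mul,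
          measure_univ, mul_one]
        rw [← ENNReal.ofReal_add (by linarith [ht.2]) ht.1]
        norm_num
      have hint : ∀ (φ : Rd d → ℝ), Continuous φ → HasCompactSupport φ →
          ∫ y, φ y ∂m = (1 - t) * (∫ y, φ y ∂μ.toMeasure) + t * φ z := by
        intro φ hφc hφs
        have h1 : Integrable φ (ENNReal.ofReal (1-t) • μ.toMeasure) :=
          (hφc.integrable_of_hasCompactSupport hφs).smul_measure ENNReal.ofReal_ne_top
        have h2 : Integrable φ (ENNReal.ofReal t • Measure.dirac z) :=
          (hφc.integrable_of_hasCompactSupport hφs :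
            Integrable φ (Measure.dirac z)).smul_measure ENNReal.ofReal_ne_top
        rw [hm, integral_add_measure h1 h2, integral_smul_measure, integral_smul_measure,
          integral_dirac, ENNReal.toReal_ofReal (by linarith [ht.2]),
          ENNReal.toReal_ofReal ht.1]
        simp [smul_eq_mul]
      set ν : Prob d := ⟨m, hprob⟩ with hν
      have hthis := heq ν
      have hνm : ν.toMeasure = m := rfl
      have hv' : (fun i => ∫ y, h i y ∂ν.toMeasure) = v t := by
        funext i
        have := hint (h i) (hh i).1.continuous (hh i).2
        simp only [hv]
        rw [hνm, this]
        ring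
      have hw' : (fun j => ∫ y, k j y ∂ν.toMeasure) = w t := by
        funext j
        have := hint (k j) (hk j).1.continuous (hk j).2
        simp only [hw]
        rw [hνm, this]
        ring
      rw [hv', hw'] at hthis
      exact hthis
    have hv0 : v 0 = a := by funext i; simp [hv]
    have hw0 : w 0 = b := by funext j; simp [hw]
    have hvd : HasDerivAt v (fun i => h i z - a i) 0 :=
      hasDerivAt_pi.2 fun i => (hasDerivAt_mul_const (h i z - a i)).const_add (a i)
    have hwd : HasDerivAt w (fun j => k j z - b j) 0 :=
      hasDerivAt_pi.2 fun j => (hasDerivAt_mul_const (k j z - b j)).const_add (b j)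
    have hfv : HasDerivAt (fun t => f (v t)) (fderiv ℝ f a (fun i => h i z - a i)) 0 := by
      have := (hf.differentiable one_ne_zero (v 0)).hasFDerivAt.comp_hasDerivAt 0 hvd
      rwa [hv0] at this
    have hgw : HasDerivAt (fun t => g (w t)) (fderiv ℝ g b (fun j => k j z - b j)) 0 := by
      have := (hg.differentiable one_ne_zero (w 0)).hasFDerivAt.comp_hasDerivAt 0 hwd
      rwa [hw0] at this
    have hu : UniqueDiffWithinAt ℝ (Set.Icc (0:ℝ) 1) 0 :=
      uniqueDiffOn_Icc_zero_one 0 ⟨le_rfl, zero_le_one⟩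
    have h1 : HasDerivWithinAt (fun t => f (v t))
        (fderiv ℝ f a (fun i => h i z - a i)) (Set.Icc 0 1) 0 := hfv.hasDerivWithinAt
    have h2 : HasDerivWithinAt (fun t => f (v t))
        (fderiv ℝ g b (fun j => k j z - b j)) (Set.Icc 0 1) 0 :=
      hgw.hasDerivWithinAt.congr (fun t ht => hveq t ht) (hveq 0 ⟨le_rfl, zero_le_one⟩)
    exact (h1.derivWithin hu).symm.trans (h2.derivWithin hu)
  -- expand the linear maps in the standard basis
  have expand : ∀ {m : ℕ} (F : (Fin m → ℝ) →L[ℝ] ℝ) (u : Fin m → ℝ),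
      F u = ∑ i, u i * F (Pi.single i 1) := by
    intro m F u
    have := LinearMap.pi_apply_eq_sum_univ (F.toLinearMap) u
    simp only [ContinuousLinearMap.coe_coe] at this
    rw [this]
    refine Finset.sum_congr rfl fun i _ => ?_
    rw [smul_eq_mul]
    congr 2
    funext j
    simp [Pi.single_apply, eq_comm]
  have hAB : ∀ z : Rd d, (∑ i, c i * h i z)
      = (∑ j, e j * k j z) + ((∑ i, c i * a i) - (∑ j, e j * b j)) := by
    intro z
    have hz := key z
    rw [expand, expand] at hz
    have e1 : ∑ i, (fun i => h i z - a i) i * fderiv ℝ f a (Pi.single i 1)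
        = (∑ i, c i * h i z) - ∑ i, c i * a i := by
      rw [← Finset.sum_sub_distrib]
      exact Finset.sum_congr rfl fun i _ => by simp only [hc]; ring
    have e2 : ∑ j, (fun j => k j z - b j) j * fderiv ℝ g b (Pi.single j 1)
        = (∑ j, e j * k j z) - ∑ j, e j * b j := by
      rw [← Finset.sum_sub_distrib]
      exact Finset.sum_congr rfl fun j _ => by simp only [he]; ring
    rw [e1, e2] at hz
    linarith
  -- equality of fderivs of the two linear combinations
  have hdh : ∀ i, HasFDerivAt (h i) (fderiv ℝ (h i) x) x :=
    fun i => ((hh i).1.differentiable (by norm_num) x).hasFDerivAt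
  have hdk : ∀ j, HasFDerivAt (k j) (fderiv ℝ (k j) x) x :=
    fun j => ((hk j).1.differentiable (by norm_num) x).hasFDerivAt
  have hA : HasFDerivAt (fun z => ∑ i, c i * h i z) (∑ i, c i • fderiv ℝ (h i) x) x :=
    HasFDerivAt.fun_sum fun i _ => (hdh i).const_mul (c i)
  have hB : HasFDerivAt (fun z => ∑ j, e j * k j z) (∑ j, e j • fderiv ℝ (k j) x) x :=
    HasFDerivAt.fun_sum fun j _ => (hdk j).const_mul (e j)
  have hA' : HasFDerivAt (fun z => ∑ i, c i * h i z) (∑ j, e j • fderiv ℝ (k j) x) x := by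
    have hfun : (fun z => ∑ i, c i * h i z)
        = fun z => (∑ j, e j * k j z) + ((∑ i, c i * a i) - (∑ j, e j * b j)) :=
      funext hAB
    rw [hfun]
    exact hB.add_const _
  have hfd2 : (∑ i, c i • fderiv ℝ (h i) x) = ∑ j, e j • fderiv ℝ (k j) x :=
    hA.unique hA'
  -- translate to gradients
  have hgdef : ∀ (φ : Rd d → ℝ) (y : Rd d),
      gradient φ y = (InnerProductSpace.toDual ℝ (Rd d)).symm (fderiv ℝ φ y) :=
    fun _ _ => rfl
  calc ∑ i, c i • gradient (h i) x
      = (InnerProductSpace.toDual ℝ (Rd d)).symm (∑ i, c i • fderiv ℝ (h i) x) := by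
        rw [map_sum]
        exact Finset.sum_congr rfl fun i _ => by rw [hgdef]; exact (_root_.map_smul _ _ _).symm
    _ = (InnerProductSpace.toDual ℝ (Rd d)).symm (∑ j, e j • fderiv ℝ (k j) x) := by
        rw [hfd2]
    _ = ∑ j, e j • gradient (k j) x := by
        rw [map_sum]
        exact Finset.sum_congr rfl fun j _ => by rw [hgdef]; exact _root_.map_smul _ _ _
end
end
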